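/- arXiv:2210.11214 — 2 statements merged into one kernel-verified Lean document; each statement's English description precedes it below -/
import Mathlib

section
/- Let V be a finite-dimensional real inner product space, let v₁, …, v_k ∈ V span a linear subspace W, let w₁, …, w_d ∈ V be arbitrary vectors, and let π : V → V denote the orthogonal projection onto the orthogonal complement W^⊥. Then det Gram(v₁,…,v_k, w₁,…,w_d) = det Gram(v₁,…,v_k) · det Gram(π(w₁),…,π(w_d)). Equivalently, ‖v₁∧⋯∧v_k∧w₁∧⋯∧w_d‖ = ‖v₁∧⋯∧v_k‖ · ‖π(w₁)∧⋯∧π(w_d)‖. -/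
open scoped RealInnerProductSpace
open Matrix

/-- The determinant of the Gram matrix `(⟨v i, v j⟩)_{i,j}` of a family of vectors. -/
noncomputable def gramDet {V : Type*} [NormedAddCommGroup V] [InnerProductSpace ℝ V]
    {n : ℕ} (v : Fin n → V) : ℝ :=
  (Matrix.of fun i j => ⟪v i, v j⟫).det

/-- If `v₁,…,v_k` span a subspace `W` and `π` is the orthogonal projection onto `Wᗮ`, then
`det Gram(v,w) = det Gram(v) · det Gram(π w)` for any vectors `w₁,…,w_d`. -/
theorem gramDet_append_eq_mul_gramDet_orthogonalProjection
    {V : Type*} [NormedAddCommGroup V] [InnerProductSpace ℝ V] [FiniteDimensional ℝ V]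
    {k d : ℕ} (v : Fin k → V) (w : Fin d → V)
    (W : Submodule ℝ V) (hW : W = Submodule.span ℝ (Set.range v)) :
    gramDet (Fin.append v w) =
      gramDet v * gramDet fun i => ((Submodule.orthogonalProjectionOnto Wᗮ (w i) : V)) := by
  classical
  set q : Fin d → V := fun i => ((Submodule.orthogonalProjectionOnto Wᗮ (w i) : V)) with hq
  have hqmem : ∀ i, q i ∈ Wᗮ := fun i => (Submodule.orthogonalProjectionOnto Wᗮ (w i)).2
  have hpmem : ∀ i, w i - q i ∈ W := by
    intro i
    have := Submodule.sub_starProjection_mem_orthogonal (K := Wᗮ) (w i)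
    rwa [Submodule.starProjection_apply, Submodule.orthogonal_orthogonal] at this
  -- coefficients
  have hc : ∀ i, ∃ c : Fin k → ℝ, ∑ l, c l • v l = w i - q i := by
    intro i
    have := hpmem i
    rw [hW, Finsupp.mem_span_range_iff_exists_finsupp] at this
    obtain ⟨c, hc⟩ := this
    exact ⟨fun l => c l, by rwa [Finsupp.sum_fintype] at hc; intro; simp⟩
  choose c hcspec using hc
  set A : Matrix (Fin k) (Fin k) ℝ := Matrix.of fun i j => ⟪v i, v j⟫ with hA
  set Q : Matrix (Fin d) (Fin d) ℝ := Matrix.of fun i j => ⟪q i, q j⟫ with hQ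
  set C : Matrix (Fin k) (Fin d) ℝ := Matrix.of fun l j => c j l with hC
  have hvq : ∀ i j, ⟪v i, q j⟫ = 0 := by
    intro i j
    exact (Submodule.mem_orthogonal W (q j)).mp (hqmem j) (v i)
      (hW ▸ Submodule.subset_span ⟨i, rfl⟩)
  have hvw : ∀ i j, ⟪v i, w j⟫ = (A * C) i j := by
    intro i j
    have : ⟪v i, w j⟫ = ⟪v i, (∑ l, c j l • v l) + q j⟫ := by
      rw [hcspec j]; rw [sub_add_cancel]
    rw [this, inner_add_right, hvq, add_zero, inner_sum]
    simp only [Matrix.mul_apply, real_inner_smul_right, hA, hC, Matrix.of_apply]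
    exact Finset.sum_congr rfl fun l _ => by ring
  have hwv : ∀ i j, ⟪w i, v j⟫ = (Cᵀ * A) i j := by
    intro i j
    rw [real_inner_comm, hvw]
    simp only [Matrix.mul_apply, Matrix.transpose_apply]
    refine Finset.sum_congr rfl fun l _ => ?_
    simp only [hA, Matrix.of_apply]
    rw [real_inner_comm]; ring
  have hww : ∀ i j, ⟪w i, w j⟫ = (Cᵀ * (A * C)) i j + Q i j := by
    intro i j
    have hi : w i = (∑ l, c i l • v l) + q i := by rw [hcspec i]; rw [sub_add_cancel]
    have hqv : ∀ l, ⟪q i, v l⟫ = 0 := fun l => by rw [real_inner_comm]; exact hvq l i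
    rw [hi, inner_add_left, sum_inner]
    have h1 : ∀ l, ⟪c i l • v l, w j⟫ = c i l * (A * C) l j := by
      intro l; rw [real_inner_smul_left, hvw]
    have h2 : ⟪q i, w j⟫ = Q i j := by
      have hj : w j = (∑ l, c j l • v l) + q j := by rw [hcspec j]; rw [sub_add_cancel]
      rw [hj, inner_add_right, inner_sum]
      simp [real_inner_smul_right, hqv, hQ]
    rw [h2]
    congr 1
    simp only [h1, Matrix.mul_apply, Matrix.transpose_apply, hC, Matrix.of_apply]
  -- reindex
  have key : gramDet (Fin.append v w) =
      (Matrix.fromBlocks A (A * C) (Cᵀ * A) (Cᵀ * (A * C) + Q)).det := by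
    rw [gramDet, ← Matrix.det_submatrix_equiv_self finSumFinEquiv]
    congr 1
    ext i j
    rcases i with i | i <;> rcases j with j | j <;>
      simp only [Matrix.submatrix_apply, Matrix.of_apply, finSumFinEquiv_apply_left,
        finSumFinEquiv_apply_right, Fin.append_left, Fin.append_right,
        Matrix.fromBlocks_apply₁₁, Matrix.fromBlocks_apply₁₂, Matrix.fromBlocks_apply₂₁,
        Matrix.fromBlocks_apply₂₂, Matrix.add_apply]
    · rfl
    · exact hvw i j
    · exact hwv i j
    · exact hww i j
  have factor : Matrix.fromBlocks A (A * C) (Cᵀ * A) (Cᵀ * (A * C) + Q) =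
      Matrix.fromBlocks 1 0 Cᵀ 1 * Matrix.fromBlocks A (A * C) 0 Q := by
    rw [Matrix.fromBlocks_multiply]
    simp [Matrix.mul_assoc]
  rw [key, factor, Matrix.det_mul, Matrix.det_fromBlocks_zero₁₂,
    Matrix.det_fromBlocks_zero₂₁]
  simp [gramDet, hA, hQ, hq]
end

section
/- Let V be a finite-dimensional real inner product space, let x₁, …, x_k, u₁, …, u_k ∈ V, and let π : V → V denote the orthogonal projection onto the span of u₁, …, u_k. Then |det(⟨x_i, u_j⟩)_{1≤i,j≤k}| = √(det Gram(u₁,…,u_k)) · √(det Gram(π(x₁),…,π(x_k))). Equivalently, |⟨x₁∧⋯∧x_k, u₁∧⋯∧u_k⟩| = ‖u₁∧⋯∧u_k‖ · ‖π(x₁)∧⋯∧π(x_k)‖. -/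
open scoped RealInnerProductSpace

lemma inner_matrix_factor {W : Type*} [NormedAddCommGroup W] [InnerProductSpace ℝ W] {k : ℕ}
    (b : OrthonormalBasis (Fin k) ℝ W) (v w : Fin k → W) :
    (Matrix.of fun i j => ⟪v i, w j⟫) =
      (Matrix.of fun i a => ⟪v i, b a⟫) * (Matrix.of fun a j => ⟪b a, w j⟫) := by
  ext i j
  simpa [Matrix.mul_apply] using (b.sum_inner_mul_inner (v i) (w j)).symm

lemma inner_matrix_det_eq {W : Type*} [NormedAddCommGroup W] [InnerProductSpace ℝ W] {k : ℕ}
    (b : OrthonormalBasis (Fin k) ℝ W) (v w : Fin k → W) :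
    (Matrix.of fun i j => ⟪v i, w j⟫).det =
      (Matrix.of fun i a => ⟪v i, b a⟫).det * (Matrix.of fun j a => ⟪w j, b a⟫).det := by
  rw [inner_matrix_factor b v w, Matrix.det_mul]
  congr 1
  rw [← Matrix.det_transpose]
  congr 1
  ext a j
  exact real_inner_comm _ _

/-- For `x₁,…,x_k, u₁,…,u_k` in a finite-dimensional real inner product space and `π` the
orthogonal projection onto the span of the `u`'s:
`|det(⟨x_i,u_j⟩)| = √(det Gram u) · √(det Gram (π x))`, i.e.
`|⟨x₁∧⋯∧x_k, u₁∧⋯∧u_k⟩| = ‖u₁∧⋯∧u_k‖·‖π(x₁)∧⋯∧π(x_k)‖`. -/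
theorem abs_det_inner_eq_sqrt_gram_mul_sqrt_gram_proj
    {V : Type*} [NormedAddCommGroup V] [InnerProductSpace ℝ V] [FiniteDimensional ℝ V]
    {k : ℕ} (x u : Fin k → V)
    (U : Submodule ℝ V) (hU : U = Submodule.span ℝ (Set.range u)) :
    |(Matrix.of fun i j => ⟪x i, u j⟫).det| =
      Real.sqrt (gramDet u) *
        Real.sqrt (gramDet fun i => ((U.orthogonalProjection (x i) : V))) := by
  by_cases hli : LinearIndependent ℝ u
  · -- nondegenerate case
    have hdim : Module.finrank ℝ U = k := by
      subst hU; rw [finrank_span_eq_card hli, Fintype.card_fin]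
    let b : OrthonormalBasis (Fin k) ℝ U :=
      (stdOrthonormalBasis ℝ U).reindex (finCongr hdim)
    have hu : ∀ j, u j ∈ U := fun j => hU ▸ Submodule.subset_span ⟨j, rfl⟩
    set w : Fin k → U := fun j => ⟨u j, hu j⟩ with hw
    set y : Fin k → U := fun i => U.orthogonalProjection (x i) with hy
    have hM : (Matrix.of fun i j => (⟪x i, u j⟫ : ℝ)) =
        (Matrix.of fun i j => (⟪y i, w j⟫ : ℝ)) := by
      ext i j
      exact (Submodule.inner_orthogonalProjectionOnto_eq_of_mem_right (K := U) (w j) (x i)).symm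
    have hGu : (Matrix.of fun i j => (⟪u i, u j⟫ : ℝ)) =
        (Matrix.of fun i j => (⟪w i, w j⟫ : ℝ)) := by
      ext i j; exact (Submodule.coe_inner U (w i) (w j)).symm
    have hGy : (Matrix.of fun i j => (⟪((y i : V)), ((y j : V))⟫ : ℝ)) =
        (Matrix.of fun i j => (⟪y i, y j⟫ : ℝ)) := by
      ext i j; exact (Submodule.coe_inner U (y i) (y j)).symm
    set p : ℝ := (Matrix.of fun i a => (⟪y i, b a⟫ : ℝ)).det with hp
    set q : ℝ := (Matrix.of fun j a => (⟪w j, b a⟫ : ℝ)).det with hq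
    have h1 : (Matrix.of fun i j => (⟪x i, u j⟫ : ℝ)).det = p * q := by
      rw [hM, inner_matrix_det_eq b y w]
    have h2 : gramDet u = q * q := by
      rw [gramDet, hGu, inner_matrix_det_eq b w w]
    have h3 : gramDet (fun i => ((U.orthogonalProjection (x i) : V))) = p * p := by
      rw [gramDet]
      rw [show (Matrix.of fun i j =>
          (⟪((U.orthogonalProjection (x i) : V)), ((U.orthogonalProjection (x j) : V))⟫ : ℝ)) =
          (Matrix.of fun i j => (⟪y i, y j⟫ : ℝ)) from hGy]
      exact inner_matrix_det_eq b y y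
    rw [h1, h2, h3, Real.sqrt_mul_self_eq_abs, Real.sqrt_mul_self_eq_abs, abs_mul, mul_comm]
  · -- degenerate case
    obtain ⟨c, hc0, i0, hi0⟩ := Fintype.not_linearIndependent_iff.mp hli
    have hMv : ∀ (v : Fin k → V), (Matrix.of fun i j => (⟪v i, u j⟫ : ℝ)).det = 0 := by
      intro v
      rw [← Matrix.exists_mulVec_eq_zero_iff]
      refine ⟨c, fun h => hi0 (congrFun h i0), ?_⟩
      ext i
      simp only [Matrix.mulVec, dotProduct, Matrix.of_apply, Pi.zero_apply]
      calc ∑ j, ⟪v i, u j⟫ * c j = ⟪v i, ∑ j, c j • u j⟫ := by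
            rw [inner_sum]; congr 1; ext j; rw [real_inner_smul_right]; ring
        _ = 0 := by rw [hc0, inner_zero_right]
    have h1 := hMv x
    have h2 : gramDet u = 0 := hMv u
    rw [h1, h2, Real.sqrt_zero, zero_mul, abs_zero]
end
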